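/- arXiv:2202.02568 — 6 statements merged into one kernel-verified Lean document; each statement's English description precedes it below -/
import Mathlib

section
/- Let n ≥ 1 and let f be a continuous nonnegative real-valued function on n×n real matrices satisfying the symmetry condition f(A) = |det A| · f(A⁻¹) for every invertible matrix A. Let M₁ ⊆ ℝⁿ be an open set, let φ : ℝⁿ → ℝⁿ be injective on M₁ and differentiable at every x ∈ M₁ with invertible derivative Dφ(x), set M₂ = φ(M₁), and let ψ : ℝⁿ → ℝⁿ restrict to the inverse of φ on M₂, differentiable at every y ∈ M₂ with Dψ(φ(x)) = (Dφ(x))⁻¹ for x ∈ M₁. Then the Lebesgue integrals of the distortion densities agree: ∫_{M₁} f(Dφ(x)) dx = ∫_{M₂} f(Dψ(y)) dy (as lower Lebesgue integrals of nonnegative functions). -/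
open MeasureTheory

/-- If `f` satisfies the symmetry condition
`f(A) = |det A| · f(A⁻¹)`, then the distortion energy of a map equals the
distortion energy of its inverse (as lower Lebesgue integrals). -/
theorem statement_0 (n : ℕ) (hn : 1 ≤ n)
    (f : Matrix (Fin n) (Fin n) ℝ → ℝ)
    (hf_cont : Continuous f) (hf_nonneg : ∀ A, 0 ≤ f A)
    (hf_sym : ∀ A : Matrix (Fin n) (Fin n) ℝ, IsUnit A.det →
      f A = |A.det| * f A⁻¹)
    (M₁ M₂ : Set (Fin n → ℝ)) (hM₁ : IsOpen M₁)
    (φ ψ : (Fin n → ℝ) → (Fin n → ℝ))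
    (φ' ψ' : (Fin n → ℝ) → ((Fin n → ℝ) →L[ℝ] (Fin n → ℝ)))
    (hφ_inj : Set.InjOn φ M₁)
    (hφ_deriv : ∀ x ∈ M₁, HasFDerivAt φ (φ' x) x)
    (hφ_invertible : ∀ x ∈ M₁,
      IsUnit (LinearMap.toMatrix' (φ' x).toLinearMap).det)
    (hM₂ : M₂ = φ '' M₁)
    (hψ_inv : ∀ x ∈ M₁, ψ (φ x) = x)
    (hψ_deriv : ∀ y ∈ M₂, HasFDerivAt ψ (ψ' y) y)
    (hψ_jac : ∀ x ∈ M₁,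
      LinearMap.toMatrix' (ψ' (φ x)).toLinearMap =
        (LinearMap.toMatrix' (φ' x).toLinearMap)⁻¹) :
    ∫⁻ x in M₁, ENNReal.ofReal (f (LinearMap.toMatrix' (φ' x).toLinearMap)) =
    ∫⁻ y in M₂, ENNReal.ofReal (f (LinearMap.toMatrix' (ψ' y).toLinearMap)) := by
  subst hM₂
  rw [lintegral_image_eq_lintegral_abs_det_fderiv_mul volume hM₁.measurableSet
    (fun x hx => (hφ_deriv x hx).hasFDerivWithinAt) hφ_inj]
  apply setLIntegral_congr_fun hM₁.measurableSet
  intro x hx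
  dsimp only
  have hdet : (φ' x).det = (LinearMap.toMatrix' (φ' x).toLinearMap).det := by
    rw [LinearMap.det_toMatrix']
  rw [hψ_jac x hx, ← ENNReal.ofReal_mul (abs_nonneg _), hdet,
    ← hf_sym _ (hφ_invertible x hx)]
end

section
/- Let n ≥ 1 and let f be a continuous nonnegative real-valued function on n×n real matrices. Suppose that for every open set M₁ ⊆ ℝⁿ, every map φ : ℝⁿ → ℝⁿ that is injective on M₁ and differentiable at every x ∈ M₁ with invertible derivative Dφ(x), and every map ψ restricting to the inverse of φ on M₂ = φ(M₁) and differentiable there with Dψ(φ(x)) = (Dφ(x))⁻¹, the equality of Lebesgue integrals ∫_{M₁} f(Dφ(x)) dx = ∫_{M₂} f(Dψ(y)) dy holds. Then f satisfies the symmetry condition: f(J) = |det J| · f(J⁻¹) for every invertible matrix J. -/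
open MeasureTheory

/-- If the distortion energy of a map always equals the distortion
energy of its inverse, then `f` satisfies the symmetry condition
`f(J) = |det J| · f(J⁻¹)` for every invertible `J`. -/
theorem statement_1 (n : ℕ) (hn : 1 ≤ n)
    (f : Matrix (Fin n) (Fin n) ℝ → ℝ)
    (hf_cont : Continuous f) (hf_nonneg : ∀ A, 0 ≤ f A)
    (h_energy : ∀ (M₁ M₂ : Set (Fin n → ℝ)), IsOpen M₁ →
      ∀ (φ ψ : (Fin n → ℝ) → (Fin n → ℝ))
        (φ' ψ' : (Fin n → ℝ) → ((Fin n → ℝ) →L[ℝ] (Fin n → ℝ))),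
      Set.InjOn φ M₁ →
      (∀ x ∈ M₁, HasFDerivAt φ (φ' x) x) →
      (∀ x ∈ M₁, IsUnit (LinearMap.toMatrix' (φ' x).toLinearMap).det) →
      M₂ = φ '' M₁ →
      (∀ x ∈ M₁, ψ (φ x) = x) →
      (∀ y ∈ M₂, HasFDerivAt ψ (ψ' y) y) →
      (∀ x ∈ M₁,
        LinearMap.toMatrix' (ψ' (φ x)).toLinearMap =
          (LinearMap.toMatrix' (φ' x).toLinearMap)⁻¹) →
      ∫⁻ x in M₁, ENNReal.ofReal (f (LinearMap.toMatrix' (φ' x).toLinearMap)) =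
      ∫⁻ y in M₂, ENNReal.ofReal (f (LinearMap.toMatrix' (ψ' y).toLinearMap))) :
    ∀ J : Matrix (Fin n) (Fin n) ℝ, IsUnit J.det →
      f J = |J.det| * f J⁻¹ := by
  intro J hJ
  set B : Set (Fin n → ℝ) := Metric.ball 0 1 with hB
  set L : (Fin n → ℝ) →L[ℝ] (Fin n → ℝ) :=
    LinearMap.toContinuousLinearMap (Matrix.toLin' J) with hL
  set Li : (Fin n → ℝ) →L[ℝ] (Fin n → ℝ) :=
    LinearMap.toContinuousLinearMap (Matrix.toLin' J⁻¹) with hLi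
  have hML : LinearMap.toMatrix' (L.toLinearMap) = J := by
    simp [hL]
  have hMLi : LinearMap.toMatrix' (Li.toLinearMap) = J⁻¹ := by
    simp [hLi]
  have hinv : ∀ x, Li (L x) = x := by
    intro x
    show Matrix.toLin' J⁻¹ (Matrix.toLin' J x) = x
    rw [← Matrix.toLin'_mul_apply, Matrix.nonsing_inv_mul J hJ]
    simp
  have key := h_energy B (L '' B) Metric.isOpen_ball L Li (fun _ => L) (fun _ => Li)
    (fun x _ y _ h => by
      have := congrArg Li h
      rwa [hinv, hinv] at this)
    (fun x _ => L.hasFDerivAt)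
    (fun x _ => by rw [hML]; exact hJ)
    rfl
    (fun x _ => hinv x)
    (fun y _ => Li.hasFDerivAt)
    (fun x _ => by rw [hML, hMLi])
  simp only [hML, hMLi] at key
  rw [setLIntegral_const, setLIntegral_const] at key
  have himg : volume (⇑L '' B) = ENNReal.ofReal |J.det| * volume B := by
    have := MeasureTheory.Measure.addHaar_image_linearMap (μ := volume)
      (Matrix.toLin' J) B
    simpa [hL, LinearMap.det_toLin'] using this
  rw [himg] at key
  have hv0 : volume B ≠ 0 := by
    simp [hB, Metric.measure_ball_pos volume (0 : Fin n → ℝ) one_pos |>.ne']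
  have hvt : volume B ≠ ⊤ := by
    exact (MeasureTheory.measure_ball_lt_top).ne
  have key2 : ENNReal.ofReal (f J) =
      ENNReal.ofReal (f J⁻¹) * ENNReal.ofReal |J.det| := by
    have : ENNReal.ofReal (f J) * volume B =
        (ENNReal.ofReal (f J⁻¹) * ENNReal.ofReal |J.det|) * volume B := by
      rw [key]; ring
    exact (ENNReal.mul_left_inj hv0 hvt).mp this
  rw [← ENNReal.ofReal_mul (hf_nonneg _)] at key2
  have := (ENNReal.ofReal_eq_ofReal_iff (hf_nonneg J)
    (mul_nonneg (hf_nonneg _) (abs_nonneg _))).mp key2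
  rw [this]; ring
end

section
/- Let n ≥ 1 and let f : ℝⁿ → ℝ be differentiable at the all-ones vector 𝟙 = (1,…,1). Define f^Sym on the positive orthant by f^Sym(σ) = (1/2)·f(σ) + (1/2)·(∏ᵢ σᵢ)·f(1/σ₁, …, 1/σₙ). Then f^Sym is differentiable at 𝟙 and every partial derivative of f^Sym at 𝟙 equals (1/2)·f(𝟙); that is, ∂f^Sym/∂σᵢ(1,…,1) = (1/2)·f(1,…,1) for every i. -/
/-- The symmetrization of a distortion function (in singular
values) is differentiable at the all-ones vector and each of its partial
derivatives there equals `(1/2) · f(𝟙)`. -/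
theorem statement_4 (n : ℕ) (hn : 1 ≤ n) (f : (Fin n → ℝ) → ℝ)
    (hf : DifferentiableAt ℝ f (fun _ => 1))
    (fSym : (Fin n → ℝ) → ℝ)
    (hfSym : ∀ σ : Fin n → ℝ, fSym σ =
      (1/2) * f σ + (1/2) * (∏ i, σ i) * f (fun i => (σ i)⁻¹)) :
    DifferentiableAt ℝ fSym (fun _ => 1) ∧
    ∀ i : Fin n, fderiv ℝ fSym (fun _ => 1) (Pi.single i 1) =
      (1/2) * f (fun _ => 1) := by
  classical
  set one : Fin n → ℝ := fun _ => 1 with hone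
  set p := fderiv ℝ f one with hpdef
  have hp : HasFDerivAt f p one := hf.hasFDerivAt
  -- inverse map
  have hinv : HasFDerivAt (fun σ : Fin n → ℝ => fun i => (σ i)⁻¹)
      (ContinuousLinearMap.pi fun i : Fin n =>
        ((-1 : ℝ) • ContinuousLinearMap.proj (R := ℝ) (φ := fun _ : Fin n => ℝ) i)) one := by
    apply hasFDerivAt_pi.2
    intro i
    have h1 : HasDerivAt (fun x : ℝ => x⁻¹) (-((one i) ^ 2)⁻¹) (one i) :=
      hasDerivAt_inv (by simp [hone])
    have h2 := h1.comp_hasFDerivAt one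
      (hasFDerivAt_apply (𝕜 := ℝ) (F' := fun _ : Fin n => ℝ) i one)
    convert h2 using 1
    ext x
    simp [hone]
    · rfl
    · simp [hone]
      ext x
      simp
  have hinvone : (fun i : Fin n => (one i)⁻¹) = one := by
    funext i; simp [hone]
  -- f composed with inverse
  have hcomp : HasFDerivAt (fun σ : Fin n → ℝ => f (fun i => (σ i)⁻¹))
      (p.comp (ContinuousLinearMap.pi fun i : Fin n =>
        ((-1 : ℝ) • ContinuousLinearMap.proj (R := ℝ) (φ := fun _ : Fin n => ℝ) i))) one := by
    have := (hinvone ▸ hp).comp one hinv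
    exact this
  -- product
  have hprod : HasFDerivAt (fun σ : Fin n → ℝ => ∏ i, σ i)
      (∑ i, (∏ j ∈ Finset.univ.erase i, one j) •
        ContinuousLinearMap.proj (R := ℝ) (φ := fun _ : Fin n => ℝ) i) one :=
    HasFDerivAt.finset_prod (fun i _ => hasFDerivAt_apply i one)
  -- assemble
  have hg : HasFDerivAt fSym
      (((1/2 : ℝ) • p) + ((((1/2 : ℝ) * ∏ i, one i) •
          (p.comp (ContinuousLinearMap.pi fun i : Fin n =>
            ((-1 : ℝ) • ContinuousLinearMap.proj (R := ℝ) (φ := fun _ : Fin n => ℝ) i)))) +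
        (f (fun i => (one i)⁻¹)) • ((1/2 : ℝ) •
          (∑ i, (∏ j ∈ Finset.univ.erase i, one j) •
            ContinuousLinearMap.proj (R := ℝ) (φ := fun _ : Fin n => ℝ) i)))) one := by
    have heq : fSym = fun σ => (1/2) * f σ + ((1/2) * ∏ i, σ i) * f (fun i => (σ i)⁻¹) :=
      funext fun σ => by rw [hfSym σ]
    rw [heq]
    exact (hp.const_mul (1/2)).add ((hprod.const_mul (1/2)).mul hcomp)
  refine ⟨hg.differentiableAt, fun i => ?_⟩
  have hfd := hg.fderiv
  rw [hfd]
  have hv : (ContinuousLinearMap.pi fun j : Fin n =>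
      ((-1 : ℝ) • ContinuousLinearMap.proj (R := ℝ) (φ := fun _ : Fin n => ℝ) j))
      (Pi.single i 1) = -(Pi.single i 1) := by
    funext k; simp
  simp only [ContinuousLinearMap.add_apply, ContinuousLinearMap.smul_apply,
    ContinuousLinearMap.comp_apply, hv, map_neg,
    ContinuousLinearMap.sum_apply, ContinuousLinearMap.proj_apply, hone,
    Finset.prod_const_one, smul_eq_mul, one_mul, Finset.sum_pi_single',
    Finset.mem_univ, if_true, inv_one]
  ring
end

section
/- Let f : ℝ³ → ℝ be nonnegative and differentiable at (1,1,1), and define its symmetrization on the positive orthant by f^Sym(σ₁,σ₂,σ₃) = (1/2)·f(σ₁,σ₂,σ₃) + (1/2)·(σ₁σ₂σ₃)·f(1/σ₁,1/σ₂,1/σ₃). Suppose f preserves structure, i.e., f(σ) ≥ f(1,1,1) for all σ in the positive orthant, and f favors isometry, i.e., f^Sym(σ) ≥ f^Sym(1,1,1) for all σ in the positive orthant. Then f(1,1,1) = 0 and the gradient of f at (1,1,1) is (0,0,0). -/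
/-- If a nonnegative distortion function `f` (differentiable at
`(1,1,1)`) preserves structure and its symmetrization favors isometry, then
`f(1,1,1) = 0` and the gradient of `f` at `(1,1,1)` vanishes. -/
theorem statement_5 (f : (Fin 3 → ℝ) → ℝ)
    (hf_nonneg : ∀ σ, 0 ≤ f σ)
    (hf_diff : DifferentiableAt ℝ f (fun _ => 1))
    (fSym : (Fin 3 → ℝ) → ℝ)
    (hfSym : ∀ σ : Fin 3 → ℝ, fSym σ =
      (1/2) * f σ + (1/2) * (∏ i, σ i) * f (fun i => (σ i)⁻¹))
    (h_struct : ∀ σ : Fin 3 → ℝ, (∀ i, 0 < σ i) → f (fun _ => 1) ≤ f σ)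
    (h_isom : ∀ σ : Fin 3 → ℝ, (∀ i, 0 < σ i) → fSym (fun _ => 1) ≤ fSym σ) :
    f (fun _ => 1) = 0 ∧ fderiv ℝ f (fun _ => 1) = 0 := by
  have hpos_nhds : ∀ᶠ σ in nhds (fun _ => (1:ℝ) : Fin 3 → ℝ), ∀ i, 0 < σ i := by
    have hopen : IsOpen {σ : Fin 3 → ℝ | ∀ i, 0 < σ i} := by
      have := isOpen_set_pi (Set.finite_univ (α := Fin 3))
        (fun i _ => isOpen_Ioi (a := (0:ℝ)))
      convert this using 1
      ext σ; simp [Set.mem_pi]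
    exact hopen.mem_nhds (by simp)
  have hmin : IsLocalMin f (fun _ => 1) := hpos_nhds.mono fun σ h => h_struct σ h
  have hgrad : fderiv ℝ f (fun _ => 1) = 0 := hmin.fderiv_eq_zero
  -- derivative of t ↦ f (t,t,t) at 1 is 0
  have hφ : HasDerivAt (fun t : ℝ => f (fun _ => t)) 0 1 := by
    have h1 : HasDerivAt (fun t : ℝ => (fun _ : Fin 3 => t)) (fun _ => (1:ℝ)) 1 :=
      hasDerivAt_pi.2 fun i => hasDerivAt_id 1
    have := (hf_diff.hasFDerivAt).comp_hasDerivAt 1 h1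
    simpa [hgrad, Function.comp_def] using this
  -- derivative of t ↦ f (1/t,1/t,1/t) at 1 is 0
  have hψ : HasDerivAt (fun t : ℝ => f (fun _ => t⁻¹)) 0 1 := by
    have h1 : HasDerivAt (fun t : ℝ => (fun _ : Fin 3 => t⁻¹)) (fun _ => (-1:ℝ)) 1 := by
      refine hasDerivAt_pi.2 fun i => ?_
      simpa using hasDerivAt_inv (one_ne_zero (α := ℝ))
    have hd : HasFDerivAt f (fderiv ℝ f (fun _ => 1)) (fun _ : Fin 3 => (1:ℝ)⁻¹) := by
      simpa using hf_diff.hasFDerivAt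
    have := hd.comp_hasDerivAt 1 h1
    simpa [hgrad, Function.comp_def] using this
  have hcube : HasDerivAt (fun t : ℝ => t ^ 3 * f (fun _ => t⁻¹))
      (3 * f (fun _ => 1)) 1 := by
    have hp : HasDerivAt (fun t : ℝ => t ^ 3) 3 1 := by
      simpa using hasDerivAt_pow 3 (1:ℝ)
    have := hp.mul hψ
    simpa [Pi.mul_def] using this
  have hh : HasDerivAt
      (fun t : ℝ => (1/2) * f (fun _ => t) + (1/2) * (t ^ 3 * f (fun _ => t⁻¹)))
      ((3/2) * f (fun _ => 1)) 1 := by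
    have := (hφ.const_mul (1/2 : ℝ)).add (hcube.const_mul (1/2 : ℝ))
    rw [Pi.add_def] at this
    rw [show (3/2 : ℝ) * f (fun _ => 1) = 1/2 * 0 + 1/2 * (3 * f (fun _ => 1)) by ring]
    exact this
  have hlm : IsLocalMin
      (fun t : ℝ => (1/2) * f (fun _ => t) + (1/2) * (t ^ 3 * f (fun _ => t⁻¹))) 1 := by
    have hpos : ∀ᶠ t : ℝ in nhds 1, 0 < t := eventually_gt_nhds one_pos
    refine hpos.mono fun t ht => ?_
    have h1 := h_isom (fun _ => t) (fun _ => ht)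
    rw [hfSym, hfSym] at h1
    simpa [Finset.prod_const, mul_assoc] using h1
  have hz : (3/2) * f (fun _ => 1) = 0 := by
    have := hlm.deriv_eq_zero
    rwa [hh.deriv] at this
  exact ⟨by linarith, hgrad⟩
end

section
/- Define the symmetrized Dirichlet distortion on the positive orthant of ℝ³ by f^Sym_D(σ₁,σ₂,σ₃) = (1/2)·∑ᵢ₌₁³ σᵢ² + (1/2)·(σ₁σ₂σ₃)·∑ₖ₌₁³ σₖ⁻². Then: (i) for every t > 0, f^Sym_D(t,t,t) = (3/2)·(t² + t); (ii) f^Sym_D(σ) > 0 for every σ in the positive orthant; (iii) the infimum of f^Sym_D over the positive orthant is 0 and is not attained. In particular f^Sym_D(1,1,1) = 3 and (1,1,1) is not a minimizer, so the symmetrized Dirichlet energy does not favor isometry and favors maps that collapse. -/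
/-- The symmetrized Dirichlet distortion in singular values (3D). -/
noncomputable def fSymD (a b c : ℝ) : ℝ :=
  (1/2) * (a^2 + b^2 + c^2) +
  (1/2) * (a * b * c) * ((a⁻¹)^2 + (b⁻¹)^2 + (c⁻¹)^2)

lemma fSymD_diag (t : ℝ) (ht : 0 < t) : fSymD t t t = (3/2) * (t^2 + t) := by
  unfold fSymD
  field_simp
  ring

lemma fSymD_pos (a b c : ℝ) (ha : 0 < a) (hb : 0 < b) (hc : 0 < c) :
    0 < fSymD a b c := by
  unfold fSymD
  have h1 : 0 < a^2 + b^2 + c^2 := by positivity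
  have h2 : 0 < (a⁻¹)^2 + (b⁻¹)^2 + (c⁻¹)^2 := by positivity
  positivity

/-- On the diagonal `f^Sym_D(t,t,t) = (3/2)(t² + t)`; `f^Sym_D` is
positive on the positive orthant; its infimum over the positive orthant is `0`
and is not attained; `f^Sym_D(1,1,1) = 3` and `(1,1,1)` is not a minimizer. -/
theorem statement_8 :
    (∀ t : ℝ, 0 < t → fSymD t t t = (3/2) * (t^2 + t)) ∧
    (∀ a b c : ℝ, 0 < a → 0 < b → 0 < c → 0 < fSymD a b c) ∧
    IsGLB {x : ℝ | ∃ a b c : ℝ, 0 < a ∧ 0 < b ∧ 0 < c ∧ x = fSymD a b c} 0 ∧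
    (0 : ℝ) ∉ {x : ℝ | ∃ a b c : ℝ, 0 < a ∧ 0 < b ∧ 0 < c ∧ x = fSymD a b c} ∧
    fSymD 1 1 1 = 3 ∧
    (∃ a b c : ℝ, 0 < a ∧ 0 < b ∧ 0 < c ∧ fSymD a b c < fSymD 1 1 1) := by
  refine ⟨fun t ht => fSymD_diag t ht, fun a b c ha hb hc => fSymD_pos a b c ha hb hc, ?_, ?_, ?_, ?_⟩
  · constructor
    · rintro x ⟨a, b, c, ha, hb, hc, rfl⟩
      exact (fSymD_pos a b c ha hb hc).le
    · intro lb hlb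
      by_contra h
      push_neg at h
      set t : ℝ := min (lb / 3) 1 / 2 with ht
      have ht0 : 0 < t := by
        have : 0 < min (lb / 3) 1 := lt_min (by linarith) one_pos
        positivity
      have ht1 : t ≤ 1 := by
        have : min (lb / 3) 1 ≤ 1 := min_le_right _ _
        simp only [ht]; linarith
      have htlb : 3 * t < lb := by
        have h1 : min (lb / 3) 1 ≤ lb / 3 := min_le_left _ _
        have : t < lb / 3 := by
          have : 0 < min (lb / 3) 1 := lt_min (by linarith) one_pos
          simp only [ht]; linarith
        linarith
      have hmem : fSymD t t t ∈ {x : ℝ | ∃ a b c : ℝ, 0 < a ∧ 0 < b ∧ 0 < c ∧ x = fSymD a b c} :=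
        ⟨t, t, t, ht0, ht0, ht0, rfl⟩
      have hle := hlb hmem
      rw [fSymD_diag t ht0] at hle
      have ht2 : t^2 ≤ t := by nlinarith
      nlinarith
  · rintro ⟨a, b, c, ha, hb, hc, h⟩
    exact absurd h.symm (ne_of_gt (fSymD_pos a b c ha hb hc))
  · unfold fSymD; norm_num
  · refine ⟨1/2, 1/2, 1/2, by norm_num, by norm_num, by norm_num, ?_⟩
    rw [fSymD_diag (1/2) (by norm_num), show fSymD 1 1 1 = 3 from by unfold fSymD; norm_num]
    norm_num
end

section
/- Define the symmetrized 3D MIPS distortion on the positive orthant of ℝ³ by f^Sym(σ₁,σ₂,σ₃) = (1/16)·(1 + σ₁σ₂σ₃)·∏ᵢ₌₁³ (σᵢ/σᵢ₊₁ + σᵢ₊₁/σᵢ), with indices taken cyclically (σ₄ = σ₁). Then: (i) f^Sym(σ) > 1/2 for every σ in the positive orthant; (ii) for every t > 0, f^Sym(t,t,t) = (1/2)·(1 + t³), so the infimum of f^Sym over the positive orthant equals 1/2 and is not attained; (iii) f^Sym(1,1,1) = 1, and in particular (1,1,1) is not a minimizer, so the symmetrized MIPS energy does not favor isometry. -/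
/-- The symmetrized 3D MIPS distortion in singular values (cyclic indices). -/
noncomputable def fSymMIPS (a b c : ℝ) : ℝ :=
  (1/16) * (1 + a * b * c) *
    ((a / b + b / a) * (b / c + c / b) * (c / a + a / c))

lemma two_le_ratio {x y : ℝ} (hx : 0 < x) (hy : 0 < y) : 2 ≤ x / y + y / x := by
  rw [div_add_div _ _ (ne_of_gt hy) (ne_of_gt hx), le_div_iff₀ (by positivity)]
  nlinarith [sq_nonneg (x - y)]

lemma fSym_lower {a b c : ℝ} (ha : 0 < a) (hb : 0 < b) (hc : 0 < c) :
    1/2 < fSymMIPS a b c := by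
  unfold fSymMIPS
  have h1 := two_le_ratio ha hb
  have h2 := two_le_ratio hb hc
  have h3 := two_le_ratio hc ha
  have habc : 0 < a * b * c := by positivity
  nlinarith [mul_pos (mul_pos ha hb) hc,
    mul_le_mul h1 h2 (by norm_num) (by linarith),
    mul_le_mul (mul_le_mul h1 h2 (by norm_num) (by linarith)) h3 (by norm_num)
      (by nlinarith)]

lemma fSym_diag {t : ℝ} (ht : 0 < t) : fSymMIPS t t t = (1/2) * (1 + t^3) := by
  unfold fSymMIPS
  field_simp
  ring

/-- `f^Sym > 1/2` on the positive orthant; on the diagonal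
`f^Sym(t,t,t) = (1/2)(1 + t³)`, so the infimum over the positive orthant is
`1/2` and is not attained; `f^Sym(1,1,1) = 1` and `(1,1,1)` is not a
minimizer: the symmetrized MIPS energy does not favor isometry. -/
theorem statement_10 :
    (∀ a b c : ℝ, 0 < a → 0 < b → 0 < c → 1/2 < fSymMIPS a b c) ∧
    (∀ t : ℝ, 0 < t → fSymMIPS t t t = (1/2) * (1 + t^3)) ∧
    IsGLB {x : ℝ | ∃ a b c : ℝ, 0 < a ∧ 0 < b ∧ 0 < c ∧ x = fSymMIPS a b c} (1/2) ∧
    (1/2 : ℝ) ∉ {x : ℝ | ∃ a b c : ℝ, 0 < a ∧ 0 < b ∧ 0 < c ∧ x = fSymMIPS a b c} ∧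
    fSymMIPS 1 1 1 = 1 ∧
    (∃ a b c : ℝ, 0 < a ∧ 0 < b ∧ 0 < c ∧ fSymMIPS a b c < fSymMIPS 1 1 1) := by
  refine ⟨fun a b c ha hb hc => fSym_lower ha hb hc,
    fun t ht => fSym_diag ht, ?_, ?_, ?_, ?_⟩
  · constructor
    · rintro x ⟨a, b, c, ha, hb, hc, rfl⟩
      exact le_of_lt (fSym_lower ha hb hc)
    · intro L hL
      by_contra hL2
      push_neg at hL2
      obtain ⟨δ, hδ⟩ : ∃ δ : ℝ, δ = L - 1/2 := ⟨_, rfl⟩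
      have hδpos : 0 < δ := by linarith
      obtain ⟨t, ht⟩ : ∃ t : ℝ, t = min 1 δ := ⟨_, rfl⟩
      have ht1 : 0 < t := ht ▸ lt_min one_pos hδpos
      have ht2 : t ≤ 1 := ht ▸ min_le_left _ _
      have ht3 : t ≤ δ := ht ▸ min_le_right _ _
      have hcube : t^3 ≤ δ := by nlinarith [mul_nonneg (mul_nonneg ht1.le ht1.le) (sub_nonneg.mpr ht2), mul_nonneg ht1.le (sub_nonneg.mpr ht2)]
      have hmem : fSymMIPS t t t ∈
          {x : ℝ | ∃ a b c : ℝ, 0 < a ∧ 0 < b ∧ 0 < c ∧ x = fSymMIPS a b c} :=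
        ⟨t, t, t, ht1, ht1, ht1, rfl⟩
      have := hL hmem
      rw [fSym_diag ht1] at this
      nlinarith
  · rintro ⟨a, b, c, ha, hb, hc, h⟩
    exact absurd h.symm (ne_of_gt (fSym_lower ha hb hc))
  · unfold fSymMIPS; norm_num
  · refine ⟨1/2, 1/2, 1/2, by norm_num, by norm_num, by norm_num, ?_⟩
    rw [fSym_diag (by norm_num : (0:ℝ) < 1/2)]
    unfold fSymMIPS; norm_num
end
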